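/- Let 0 < p ≤ 1, θ ≥ 0, λ ≥ 0, c ≥ 0, let r be a positive integer with p(r - θ) > 1, and let b = (b_j)_{j≥1} be a sequence of non-negative reals. For s ∈ F define p_s := ∏_{j∈J_s} (1 + λ s_j)^θ and β_s := c^{|J_s|} · (∏_{j∈J_s} s_j^{-r}) · Σ_{k∈F : J_k = J_s, k_j ≤ 2r for all j} (∏_{j∈J_s} b_j^{k_j}) · (|k|_1)! / (∏_{j∈J_s} k_j!). Then there exists a constant K ≥ 1, depending only on p, θ, λ, c, and r, such that Σ_{s∈F} (p_s β_s)^p ≤ Σ_{k∈F : k_j ≤ 2r for all j} ( (∏_j (K b_j)^{k_j}) · (|k|_1)! / (∏_j k_j!) )^p. -/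

import Mathlib

open scoped ENNReal

/-- The factor `p_s = ∏_{j∈J_s} (1 + λ s_j)^θ`. -/
noncomputable def pWeight (θ lam : ℝ) (s : ℕ →₀ ℕ) : ℝ :=
  ∏ j ∈ s.support, (1 + lam * (s j : ℝ)) ^ θ

/-- The majorant
`β_s = c^{|J_s|} (∏_{j∈J_s} s_j^{-r}) Σ_{k : J_k = J_s, k_j ≤ 2r}
  (∏_{j∈J_s} b_j^{k_j}) |k|₁! / ∏_{j∈J_s} k_j!`. -/
noncomputable def betaB (c : ℝ) (r : ℕ) (b : ℕ → ℝ) (s : ℕ →₀ ℕ) : ℝ :=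
  c ^ s.support.card * (∏ j ∈ s.support, (s j : ℝ) ^ (-(r : ℝ))) *
    ∑' k : {k : ℕ →₀ ℕ // k.support = s.support ∧ ∀ j, k j ≤ 2 * r},
      (∏ j ∈ s.support, b j ^ (k.1 j)) *
        ((∑ j ∈ s.support, k.1 j).factorial : ℝ) /
          ∏ j ∈ s.support, ((k.1 j).factorial : ℝ)

namespace LpCoreAux

lemma sum_rpow_le {ι : Type*} (t : Finset ι) (f : ι → ℝ≥0∞) {p : ℝ}
    (hp0 : 0 < p) (hp1 : p ≤ 1) : (∑ i ∈ t, f i) ^ p ≤ ∑ i ∈ t, f i ^ p := by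
  classical
  induction t using Finset.induction_on with
  | empty => simp [ENNReal.zero_rpow_of_pos hp0]
  | @insert a s h ih =>
      rw [Finset.sum_insert h, Finset.sum_insert h]
      exact (ENNReal.rpow_add_le_add_rpow _ _ hp0.le hp1).trans (by gcongr)

lemma finite_T (J : Finset ℕ) (m : ℕ) :
    Finite {k : ℕ →₀ ℕ // k.support = J ∧ ∀ j, k j ≤ m} := by
  have hz : ∀ k : {k : ℕ →₀ ℕ // k.support = J ∧ ∀ j, k j ≤ m}, ∀ j : ℕ, j ∉ J → k.1 j = 0 := by
    intro k j hj
    exact Finsupp.notMem_support_iff.mp (by rw [k.2.1]; exact hj)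
  apply Finite.of_injective
    (fun k : {k : ℕ →₀ ℕ // k.support = J ∧ ∀ j, k j ≤ m} =>
      (fun j : J => (⟨k.1 j, Nat.lt_succ_of_le (k.2.2 j)⟩ : Fin (m + 1))))
  intro k k' h
  apply Subtype.ext
  ext j
  by_cases hj : j ∈ J
  · exact congrArg Fin.val (congrFun h ⟨j, hj⟩)
  · rw [hz k j hj, hz k' j hj]

noncomputable def insertEquiv (a : ℕ) (J : Finset ℕ) (ha : a ∉ J) :
    {s : ℕ →₀ ℕ // s.support ⊆ insert a J} ≃ ℕ × {s : ℕ →₀ ℕ // s.support ⊆ J} where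
  toFun s := (s.1 a, ⟨s.1.erase a, by
    intro j hj
    rw [Finsupp.support_erase, Finset.mem_erase] at hj
    rcases Finset.mem_insert.mp (s.2 hj.2) with h | h
    · exact absurd h hj.1
    · exact h⟩)
  invFun nt := ⟨Finsupp.single a nt.1 + nt.2.1, by
    intro j hj
    rcases Finset.mem_union.mp (Finsupp.support_add hj) with h | h
    · exact Finset.mem_insert.mpr (Or.inl (Finset.mem_singleton.mp (Finsupp.support_single_subset h)))
    · exact Finset.mem_insert_of_mem (nt.2.2 h)⟩
  left_inv s := Subtype.ext (Finsupp.single_add_erase a s.1)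
  right_inv nt := by
    obtain ⟨n, t⟩ := nt
    have hte : a ∉ t.1.support := fun h => ha (t.2 h)
    have hta : t.1 a = 0 := Finsupp.notMem_support_iff.mp hte
    refine Prod.ext ?_ ?_
    · simp [Finsupp.add_apply, hta]
    · apply Subtype.ext
      simp only
      rw [Finsupp.erase_add, Finsupp.erase_single, Finsupp.erase_of_notMem_support hte, zero_add]

lemma tsum_subset_prod (G : ℕ → ℝ≥0∞) (J : Finset ℕ) :
    ∑' s : {s : ℕ →₀ ℕ // s.support ⊆ J}, ∏ j ∈ J, G (s.1 j) = (∑' n, G n) ^ J.card := by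
  classical
  induction J using Finset.induction_on with
  | empty =>
      haveI : Unique {s : ℕ →₀ ℕ // s.support ⊆ (∅ : Finset ℕ)} :=
        { default := ⟨0, by simp⟩
          uniq := fun s => Subtype.ext
            (Finsupp.support_eq_empty.mp (Finset.subset_empty.mp s.2)) }
      rw [tsum_eq_single default (fun b hb => absurd (Unique.eq_default b) hb)]
      simp
  | @insert a J h ih =>
      rw [← Equiv.tsum_eq (insertEquiv a J h).symm]
      have hbody : ∀ nt : ℕ × {s : ℕ →₀ ℕ // s.support ⊆ J},
          (∏ j ∈ insert a J, G (((insertEquiv a J h).symm nt).1 j))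
            = G nt.1 * ∏ j ∈ J, G (nt.2.1 j) := by
        rintro ⟨n, t⟩
        have hta : t.1 a = 0 := Finsupp.notMem_support_iff.mp (fun hh => h (t.2 hh))
        rw [Finset.prod_insert h]
        congr 1
        · simp [insertEquiv, Finsupp.add_apply, hta]
        · apply Finset.prod_congr rfl
          intro j hj
          have hja : j ≠ a := fun e => h (e ▸ hj)
          simp [insertEquiv, Finsupp.add_apply, Finsupp.single_eq_of_ne hja]
      rw [tsum_congr hbody,
        ENNReal.tsum_prod (f := fun n (t : {s : ℕ →₀ ℕ // s.support ⊆ J}) =>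
          G n * ∏ j ∈ J, G (t.1 j))]
      simp_rw [ENNReal.tsum_mul_left]
      rw [ENNReal.tsum_mul_right, ih, Finset.card_insert_of_notMem h, pow_succ, mul_comm]

lemma tsum_support_eq_le (G : ℕ → ℝ≥0∞) (J : Finset ℕ) :
    ∑' s : {s : ℕ →₀ ℕ // s.support = J}, ∏ j ∈ J, G (s.1 j) ≤ (∑' n, G n) ^ J.card := by
  rw [← tsum_subset_prod G J]
  exact ENNReal.summable.tsum_le_tsum_of_inj (fun s => ⟨s.1, by rw [s.2]⟩)
    (fun s s' h => Subtype.ext (congrArg (fun x : {s : ℕ →₀ ℕ // s.support ⊆ J} => x.1) h))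
    (fun _ _ => zero_le) (fun s => le_rfl) ENNReal.summable

end LpCoreAux

namespace LpCoreAux

noncomputable def Gfun (p θ lam : ℝ) (r : ℕ) (n : ℕ) : ℝ≥0∞ :=
  ENNReal.ofReal (((1 + lam * (n : ℝ)) ^ θ * (n : ℝ) ^ (-(r : ℝ))) ^ p)

noncomputable def Dfun (b : ℕ → ℝ) (k : ℕ →₀ ℕ) (J : Finset ℕ) : ℝ :=
  (∏ j ∈ J, b j ^ (k j)) * ((∑ j ∈ J, k j).factorial : ℝ) / ∏ j ∈ J, ((k j).factorial : ℝ)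

lemma Dfun_nonneg {b : ℕ → ℝ} (hb : ∀ j, 0 ≤ b j) (k : ℕ →₀ ℕ) (J : Finset ℕ) :
    0 ≤ Dfun b k J :=
  div_nonneg (mul_nonneg (Finset.prod_nonneg fun j _ => pow_nonneg (hb j) _)
    (Nat.cast_nonneg _)) (Finset.prod_nonneg fun j _ => Nat.cast_nonneg _)

noncomputable def Ffun (p θ lam c : ℝ) (r : ℕ) (b : ℕ → ℝ) (s k : ℕ →₀ ℕ) : ℝ≥0∞ :=
  (∏ j ∈ s.support, Gfun p θ lam r (s j)) *
    ENNReal.ofReal ((c ^ s.support.card * Dfun b k s.support) ^ p)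

lemma Gsum_ne_top {p θ lam : ℝ} {r : ℕ} (hp0 : 0 < p) (hθ : 0 ≤ θ) (hlam : 0 ≤ lam)
    (hr : 0 < r) (hrθ : 1 < p * ((r : ℝ) - θ)) :
    (∑' n : ℕ, Gfun p θ lam r n) ≠ ⊤ := by
  obtain ⟨q, hq, hq1⟩ : ∃ q : ℝ, q = p * ((r : ℝ) - θ) ∧ 1 < q := ⟨_, rfl, hrθ⟩
  have hC : 0 ≤ (1 + lam) ^ (θ * p) := Real.rpow_nonneg (by linarith) _
  have hrpos : (0 : ℝ) < (r : ℝ) := by exact_mod_cast hr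
  have hsum : Summable (fun n : ℕ => (1 + lam) ^ (θ * p) * (n : ℝ) ^ (-q)) :=
    (Real.summable_nat_rpow.mpr (by linarith)).mul_left _
  have hle : ∀ n : ℕ, ((1 + lam * (n : ℝ)) ^ θ * (n : ℝ) ^ (-(r : ℝ))) ^ p
      ≤ (1 + lam) ^ (θ * p) * (n : ℝ) ^ (-q) := by
    intro n
    rcases Nat.eq_zero_or_pos n with rfl | hn
    · simp only [Nat.cast_zero]
      rw [Real.zero_rpow (neg_ne_zero.mpr hrpos.ne'), mul_zero, Real.zero_rpow hp0.ne']
      exact mul_nonneg hC (Real.rpow_nonneg le_rfl _)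
    · have hn1 : (1 : ℝ) ≤ (n : ℝ) := by exact_mod_cast hn
      have hnpos : (0 : ℝ) < (n : ℝ) := by linarith
      have step1 : (1 + lam * (n : ℝ)) ^ θ ≤ (1 + lam) ^ θ * (n : ℝ) ^ θ := by
        rw [← Real.mul_rpow (by linarith) hnpos.le]
        exact Real.rpow_le_rpow (by nlinarith) (by nlinarith) hθ
      have step2 : (1 + lam * (n : ℝ)) ^ θ * (n : ℝ) ^ (-(r : ℝ))
          ≤ (1 + lam) ^ θ * (n : ℝ) ^ (θ - (r : ℝ)) := by
        have heq : (1 + lam) ^ θ * (n : ℝ) ^ θ * (n : ℝ) ^ (-(r : ℝ))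
            = (1 + lam) ^ θ * (n : ℝ) ^ (θ - (r : ℝ)) := by
          rw [mul_assoc, ← Real.rpow_add hnpos]
          ring_nf
        calc (1 + lam * (n : ℝ)) ^ θ * (n : ℝ) ^ (-(r : ℝ))
            ≤ (1 + lam) ^ θ * (n : ℝ) ^ θ * (n : ℝ) ^ (-(r : ℝ)) :=
              mul_le_mul_of_nonneg_right step1 (Real.rpow_nonneg hnpos.le _)
          _ = _ := heq
      have hbase : 0 ≤ (1 + lam * (n : ℝ)) ^ θ * (n : ℝ) ^ (-(r : ℝ)) :=
        mul_nonneg (Real.rpow_nonneg (by nlinarith) _) (Real.rpow_nonneg hnpos.le _)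
      calc ((1 + lam * (n : ℝ)) ^ θ * (n : ℝ) ^ (-(r : ℝ))) ^ p
          ≤ ((1 + lam) ^ θ * (n : ℝ) ^ (θ - (r : ℝ))) ^ p :=
            Real.rpow_le_rpow hbase step2 hp0.le
        _ = (1 + lam) ^ (θ * p) * (n : ℝ) ^ (-q) := by
            rw [Real.mul_rpow (Real.rpow_nonneg (by linarith) _)
                (Real.rpow_nonneg hnpos.le _),
              ← Real.rpow_mul (by linarith : (0:ℝ) ≤ 1 + lam),
              ← Real.rpow_mul hnpos.le]
            congr 1
            rw [hq]; ring
  have hfin : (∑' n : ℕ, Gfun p θ lam r n)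
      ≤ ENNReal.ofReal (∑' n : ℕ, (1 + lam) ^ (θ * p) * (n : ℝ) ^ (-q)) := calc
    (∑' n : ℕ, Gfun p θ lam r n)
      ≤ ∑' n : ℕ, ENNReal.ofReal ((1 + lam) ^ (θ * p) * (n : ℝ) ^ (-q)) :=
        ENNReal.tsum_le_tsum fun n => ENNReal.ofReal_le_ofReal (hle n)
    _ = ENNReal.ofReal (∑' n : ℕ, (1 + lam) ^ (θ * p) * (n : ℝ) ^ (-q)) :=
        (ENNReal.ofReal_tsum_of_nonneg
          (fun n => mul_nonneg hC (Real.rpow_nonneg (Nat.cast_nonneg n) _)) hsum).symm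
  exact ne_top_of_le_ne_top ENNReal.ofReal_ne_top hfin

end LpCoreAux

namespace LpCoreAux

lemma key1 (p θ lam c : ℝ) (r : ℕ) (hp0 : 0 < p) (hp1 : p ≤ 1)
    (hlam : 0 ≤ lam) (hc : 0 ≤ c)
    (b : ℕ → ℝ) (hb : ∀ j, 0 ≤ b j) (s : ℕ →₀ ℕ) :
    ENNReal.ofReal ((pWeight θ lam s * betaB c r b s) ^ p)
      ≤ ∑' k : {k : ℕ →₀ ℕ // k.support = s.support ∧ ∀ j, k j ≤ 2 * r},
          Ffun p θ lam c r b s k.1 := by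
  classical
  haveI : Finite {k : ℕ →₀ ℕ // k.support = s.support ∧ ∀ j, k j ≤ 2 * r} := finite_T _ _
  haveI := Fintype.ofFinite {k : ℕ →₀ ℕ // k.support = s.support ∧ ∀ j, k j ≤ 2 * r}
  have hpW : 0 ≤ pWeight θ lam s :=
    Finset.prod_nonneg fun j _ => Real.rpow_nonneg
      (add_nonneg zero_le_one (mul_nonneg hlam (Nat.cast_nonneg _))) _
  have hW : 0 ≤ pWeight θ lam s *
      (c ^ s.support.card * ∏ j ∈ s.support, (s j : ℝ) ^ (-(r : ℝ))) :=
    mul_nonneg hpW (mul_nonneg (pow_nonneg hc _)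
      (Finset.prod_nonneg fun j _ => Real.rpow_nonneg (Nat.cast_nonneg _) _))
  have hterm : ∀ k : {k : ℕ →₀ ℕ // k.support = s.support ∧ ∀ j, k j ≤ 2 * r},
      0 ≤ pWeight θ lam s *
        (c ^ s.support.card * ∏ j ∈ s.support, (s j : ℝ) ^ (-(r : ℝ))) *
          Dfun b k.1 s.support :=
    fun k => mul_nonneg hW (Dfun_nonneg hb _ _)
  have hsplit : pWeight θ lam s * betaB c r b s
      = ∑ k : {k : ℕ →₀ ℕ // k.support = s.support ∧ ∀ j, k j ≤ 2 * r},
          pWeight θ lam s *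
            (c ^ s.support.card * ∏ j ∈ s.support, (s j : ℝ) ^ (-(r : ℝ))) *
              Dfun b k.1 s.support := by
    simp only [betaB, Dfun]
    rw [tsum_fintype, ← mul_assoc, Finset.mul_sum]
  rw [hsplit, ← ENNReal.ofReal_rpow_of_nonneg
      (Finset.sum_nonneg fun k _ => hterm k) hp0.le,
    ENNReal.ofReal_sum_of_nonneg (fun k _ => hterm k)]
  refine le_trans (sum_rpow_le _ _ hp0 hp1) (le_of_eq ?_)
  rw [tsum_fintype]
  refine Finset.sum_congr rfl fun k _ => ?_
  have hx' : ∀ j ∈ s.support,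
      (0:ℝ) ≤ (1 + lam * ((s j : ℕ) : ℝ)) ^ θ * ((s j : ℕ) : ℝ) ^ (-(r : ℝ)) :=
    fun j _ => mul_nonneg (Real.rpow_nonneg
      (add_nonneg zero_le_one (mul_nonneg hlam (Nat.cast_nonneg _))) _)
      (Real.rpow_nonneg (Nat.cast_nonneg _) _)
  have hx : (0:ℝ) ≤ ∏ j ∈ s.support,
      (1 + lam * ((s j : ℕ) : ℝ)) ^ θ * ((s j : ℕ) : ℝ) ^ (-(r : ℝ)) :=
    Finset.prod_nonneg hx'
  have hcD : (0:ℝ) ≤ c ^ s.support.card * Dfun b k.1 s.support :=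
    mul_nonneg (pow_nonneg hc _) (Dfun_nonneg hb _ _)
  have hre : pWeight θ lam s *
      (c ^ s.support.card * ∏ j ∈ s.support, (s j : ℝ) ^ (-(r : ℝ))) *
        Dfun b k.1 s.support
      = (∏ j ∈ s.support, (1 + lam * ((s j : ℕ) : ℝ)) ^ θ * ((s j : ℕ) : ℝ) ^ (-(r : ℝ)))
          * (c ^ s.support.card * Dfun b k.1 s.support) := by
    simp only [pWeight]
    rw [Finset.prod_mul_distrib]
    ring
  rw [ENNReal.ofReal_rpow_of_nonneg (hterm k) hp0.le, hre,
    Real.mul_rpow hx hcD,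
    ENNReal.ofReal_mul (Real.rpow_nonneg hx _),
    ← Real.finset_prod_rpow _ _ hx' p,
    ENNReal.ofReal_prod_of_nonneg (fun j hj => Real.rpow_nonneg (hx' j hj) _)]
  simp only [Ffun, Gfun]

end LpCoreAux

namespace LpCoreAux

lemma key2 (p θ lam c K : ℝ) (r : ℕ) (hp0 : 0 < p) (hc : 0 ≤ c) (hK1 : 1 ≤ K)
    (hA : (∑' n, Gfun p θ lam r n) ≠ ⊤)
    (hKp : c ^ p * (∑' n, Gfun p θ lam r n).toReal ≤ K ^ p)
    (b : ℕ → ℝ) (hb : ∀ j, 0 ≤ b j) (k : ℕ →₀ ℕ) :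
    (∑' s : {s : ℕ →₀ ℕ // s.support = k.support}, Ffun p θ lam c r b s.1 k)
      ≤ ENNReal.ofReal (((∏ j ∈ k.support, (K * b j) ^ (k j)) *
          ((∑ j ∈ k.support, k j).factorial : ℝ) /
            ∏ j ∈ k.support, ((k j).factorial : ℝ)) ^ p) := by
  have hK0 : (0:ℝ) ≤ K := le_trans zero_le_one hK1
  have hKp1 : (1:ℝ) ≤ K ^ p := Real.one_le_rpow hK1 hp0.le
  have hDk0 : 0 ≤ Dfun b k k.support := Dfun_nonneg hb _ _
  have h1 : ∀ s : {s : ℕ →₀ ℕ // s.support = k.support}, Ffun p θ lam c r b s.1 k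
      = (∏ j ∈ k.support, Gfun p θ lam r (s.1 j)) *
          ENNReal.ofReal ((c ^ k.support.card * Dfun b k k.support) ^ p) := by
    intro s
    simp only [Ffun]
    rw [s.2]
  have hcard : k.support.card ≤ ∑ j ∈ k.support, k j := by
    rw [Finset.card_eq_sum_ones]
    exact Finset.sum_le_sum fun j hj =>
      Nat.one_le_iff_ne_zero.mpr (Finsupp.mem_support_iff.mp hj)
  calc (∑' s : {s : ℕ →₀ ℕ // s.support = k.support}, Ffun p θ lam c r b s.1 k)
      = (∑' s : {s : ℕ →₀ ℕ // s.support = k.support},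
          ∏ j ∈ k.support, Gfun p θ lam r (s.1 j)) *
            ENNReal.ofReal ((c ^ k.support.card * Dfun b k k.support) ^ p) := by
        rw [tsum_congr h1, ENNReal.tsum_mul_right]
    _ ≤ (∑' n, Gfun p θ lam r n) ^ k.support.card *
            ENNReal.ofReal ((c ^ k.support.card * Dfun b k k.support) ^ p) :=
        mul_le_mul_left (tsum_support_eq_le _ _) _
    _ ≤ ENNReal.ofReal ((K ^ (∑ j ∈ k.support, k j) * Dfun b k k.support) ^ p) := by
        rw [← ENNReal.ofReal_toReal hA,
          ← ENNReal.ofReal_pow ENNReal.toReal_nonneg,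
          ← ENNReal.ofReal_mul (pow_nonneg ENNReal.toReal_nonneg _)]
        apply ENNReal.ofReal_le_ofReal
        have e1 : (K ^ (∑ j ∈ k.support, k j) * Dfun b k k.support) ^ p
            = (K ^ p) ^ (∑ j ∈ k.support, k j) * Dfun b k k.support ^ p := by
          rw [Real.mul_rpow (pow_nonneg hK0 _) hDk0,
            ← Real.rpow_natCast K (∑ j ∈ k.support, k j), ← Real.rpow_mul hK0,
            mul_comm ((∑ j ∈ k.support, k j : ℕ) : ℝ) p, Real.rpow_mul hK0,
            Real.rpow_natCast]
        have e2 : (c ^ k.support.card * Dfun b k k.support) ^ p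
            = (c ^ p) ^ k.support.card * Dfun b k k.support ^ p := by
          rw [Real.mul_rpow (pow_nonneg hc _) hDk0,
            ← Real.rpow_natCast c k.support.card, ← Real.rpow_mul hc,
            mul_comm ((k.support.card : ℕ) : ℝ) p, Real.rpow_mul hc,
            Real.rpow_natCast]
        rw [e1, e2, ← mul_assoc]
        refine mul_le_mul_of_nonneg_right ?_ (Real.rpow_nonneg hDk0 p)
        rw [← mul_pow]
        calc ((∑' n, Gfun p θ lam r n).toReal * c ^ p) ^ k.support.card
            ≤ (K ^ p) ^ k.support.card :=
              pow_le_pow_left₀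
                (mul_nonneg ENNReal.toReal_nonneg (Real.rpow_nonneg hc _))
                (by linarith) _
          _ ≤ (K ^ p) ^ (∑ j ∈ k.support, k j) := pow_le_pow_right₀ hKp1 hcard
    _ = ENNReal.ofReal (((∏ j ∈ k.support, (K * b j) ^ (k j)) *
          ((∑ j ∈ k.support, k j).factorial : ℝ) /
            ∏ j ∈ k.support, ((k j).factorial : ℝ)) ^ p) := by
        congr 1
        congr 1
        simp only [Dfun, mul_pow, Finset.prod_mul_distrib,
          Finset.prod_pow_eq_pow_sum]
        ring

end LpCoreAux


open LpCoreAux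

/-- Sequence-space core of the `ℓ_p`-summability theorem under the assumption `b ∈ ℓ_p`:
there is a constant `K ≥ 1`, depending only on `p, θ, λ, c, r`, such that
`Σ_{s∈F} (p_s β_s)^p ≤ Σ_{k∈F, k_j ≤ 2r} ((∏_j (K b_j)^{k_j}) |k|₁!/∏_j k_j!)^p`
(interpreted in `[0,∞]`). -/
theorem lp_summability_core_b (p θ lam c : ℝ) (r : ℕ)
    (hp0 : 0 < p) (hp1 : p ≤ 1) (hθ : 0 ≤ θ) (hlam : 0 ≤ lam) (hc : 0 ≤ c)
    (hr : 0 < r) (hrθ : 1 < p * ((r : ℝ) - θ)) :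
    ∃ K : ℝ, 1 ≤ K ∧ ∀ b : ℕ → ℝ, (∀ j, 0 ≤ b j) →
      (∑' s : ℕ →₀ ℕ, ENNReal.ofReal ((pWeight θ lam s * betaB c r b s) ^ p)) ≤
        ∑' k : {k : ℕ →₀ ℕ // ∀ j, k j ≤ 2 * r},
          ENNReal.ofReal
            (((∏ j ∈ k.1.support, (K * b j) ^ (k.1 j)) *
                ((∑ j ∈ k.1.support, k.1 j).factorial : ℝ) /
                  ∏ j ∈ k.1.support, ((k.1 j).factorial : ℝ)) ^ p) := by
  classical
  have hA : (∑' n, Gfun p θ lam r n) ≠ ⊤ := Gsum_ne_top hp0 hθ hlam hr hrθ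
  have hAr0 : 0 ≤ (∑' n, Gfun p θ lam r n).toReal := ENNReal.toReal_nonneg
  refine ⟨max 1 (c * (∑' n, Gfun p θ lam r n).toReal ^ (1/p)), le_max_left _ _, ?_⟩
  set K := max 1 (c * (∑' n, Gfun p θ lam r n).toReal ^ (1/p)) with hK
  have hK1 : (1:ℝ) ≤ K := le_max_left _ _
  have hKp : c ^ p * (∑' n, Gfun p θ lam r n).toReal ≤ K ^ p := by
    have h2 : (c * (∑' n, Gfun p θ lam r n).toReal ^ (1/p)) ^ p
        = c ^ p * (∑' n, Gfun p θ lam r n).toReal := by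
      rw [Real.mul_rpow hc (Real.rpow_nonneg hAr0 _), ← Real.rpow_mul hAr0,
        one_div_mul_cancel hp0.ne', Real.rpow_one]
    rw [← h2]
    exact Real.rpow_le_rpow (mul_nonneg hc (Real.rpow_nonneg hAr0 _))
      (le_max_right _ _) hp0.le
  intro b hb
  let e : (Σ s : ℕ →₀ ℕ, {k : ℕ →₀ ℕ // k.support = s.support ∧ ∀ j, k j ≤ 2 * r}) ≃
      (Σ k : {k : ℕ →₀ ℕ // ∀ j, k j ≤ 2 * r}, {s : ℕ →₀ ℕ // s.support = k.1.support}) :=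
    ⟨fun σ => ⟨⟨σ.2.1, σ.2.2.2⟩, ⟨σ.1, σ.2.2.1.symm⟩⟩,
     fun τ => ⟨τ.2.1, ⟨τ.1.1, τ.2.2.symm, τ.1.2⟩⟩,
     fun σ => rfl, fun τ => rfl⟩
  calc (∑' s : ℕ →₀ ℕ, ENNReal.ofReal ((pWeight θ lam s * betaB c r b s) ^ p))
      ≤ ∑' s : ℕ →₀ ℕ, ∑' k : {k : ℕ →₀ ℕ // k.support = s.support ∧ ∀ j, k j ≤ 2 * r},
          Ffun p θ lam c r b s k.1 :=
        ENNReal.tsum_le_tsum fun s => key1 p θ lam c r hp0 hp1 hlam hc b hb s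
    _ = ∑' σ : (Σ s : ℕ →₀ ℕ, {k : ℕ →₀ ℕ // k.support = s.support ∧ ∀ j, k j ≤ 2 * r}),
          Ffun p θ lam c r b σ.1 σ.2.1 :=
        (ENNReal.tsum_sigma' (fun σ : (Σ s : ℕ →₀ ℕ,
          {k : ℕ →₀ ℕ // k.support = s.support ∧ ∀ j, k j ≤ 2 * r}) =>
            Ffun p θ lam c r b σ.1 σ.2.1)).symm
    _ = ∑' τ : (Σ k : {k : ℕ →₀ ℕ // ∀ j, k j ≤ 2 * r},
          {s : ℕ →₀ ℕ // s.support = k.1.support}),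
          Ffun p θ lam c r b τ.2.1 τ.1.1 :=
        e.tsum_eq (fun τ : (Σ k : {k : ℕ →₀ ℕ // ∀ j, k j ≤ 2 * r},
          {s : ℕ →₀ ℕ // s.support = k.1.support}) => Ffun p θ lam c r b τ.2.1 τ.1.1)
    _ = ∑' k : {k : ℕ →₀ ℕ // ∀ j, k j ≤ 2 * r},
          ∑' s : {s : ℕ →₀ ℕ // s.support = k.1.support}, Ffun p θ lam c r b s.1 k.1 :=
        ENNReal.tsum_sigma' _
    _ ≤ _ := ENNReal.tsum_le_tsum fun k =>
        key2 p θ lam c K r hp0 hc hK1 hA hKp b hb k.1
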